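/- arXiv:1712.09230 — 4 statements merged into one kernel-verified Lean document; each statement's English description precedes it below -/
import Mathlib

section
/- At any point during Patience Sorting the top elements of the piles are strictly increasing from left to right: for every t with 1 ≤ t ≤ n and all k < k', if the sets A = {i ≤ t : L(i) = k} and B = {i ≤ t : L(i) = k'} are both nonempty, then min{σ(i) : i ∈ A} < min{σ(i) : i ∈ B}. -/
/-- `l` is the index list of a (strictly) increasing subsequence of `σ`. -/
def IsIncSubseq {n : ℕ} (σ : Fin n → ℤ) (l : List (Fin n)) : Prop :=
  l.Chain' (fun i j => i < j ∧ σ i < σ j)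

/-- Length of a longest increasing subsequence of `σ`. -/
noncomputable def lis {n : ℕ} (σ : Fin n → ℤ) : ℕ :=
  sSup {m | ∃ l : List (Fin n), IsIncSubseq σ l ∧ l.length = m}

/-- Length of a longest increasing subsequence of `σ` ending at index `i`. -/
noncomputable def L {n : ℕ} (σ : Fin n → ℤ) (i : Fin n) : ℕ :=
  sSup {m | ∃ l : List (Fin n), IsIncSubseq σ l ∧ l.getLast? = some i ∧ l.length = m}

/-- Length of a longest increasing subsequence of `σ` starting at index `i`. -/
noncomputable def R {n : ℕ} (σ : Fin n → ℤ) (i : Fin n) : ℕ :=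
  sSup {m | ∃ l : List (Fin n), IsIncSubseq σ l ∧ l.head? = some i ∧ l.length = m}

namespace PatienceAux

variable {n : ℕ}

/-- The order relation underlying increasing subsequences. -/
def Rel (σ : Fin n → ℤ) : Fin n → Fin n → Prop := fun i j => i < j ∧ σ i < σ j

instance (σ : Fin n → ℤ) : IsTrans (Fin n) (Rel σ) :=
  ⟨fun _ _ _ h1 h2 => ⟨h1.1.trans h2.1, h1.2.trans h2.2⟩⟩

lemma isIncSubseq_iff_pairwise (σ : Fin n → ℤ) (l : List (Fin n)) :
    IsIncSubseq σ l ↔ l.Pairwise (Rel σ) := by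
  show l.Chain' (Rel σ) ↔ _
  exact List.isChain_iff_pairwise

/-- The set of lengths of increasing subsequences ending at `i`. -/
def LSet (σ : Fin n → ℤ) (i : Fin n) : Set ℕ :=
  {m | ∃ l : List (Fin n), IsIncSubseq σ l ∧ l.getLast? = some i ∧ l.length = m}

lemma L_eq (σ : Fin n → ℤ) (i : Fin n) : L σ i = sSup (LSet σ i) := rfl

lemma bddAbove_LSet (σ : Fin n → ℤ) (i : Fin n) : BddAbove (LSet σ i) := by
  refine ⟨n, fun m hm => ?_⟩
  obtain ⟨l, hl, -, hlen⟩ := hm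
  rw [isIncSubseq_iff_pairwise] at hl
  have hnd : l.Nodup := hl.imp (fun h => h.1.ne)
  calc m = l.length := hlen.symm
    _ ≤ Fintype.card (Fin n) := hnd.length_le_card
    _ = n := Fintype.card_fin n

lemma one_mem_LSet (σ : Fin n → ℤ) (i : Fin n) : 1 ∈ LSet σ i :=
  ⟨[i], List.isChain_singleton i, rfl, rfl⟩

lemma nonempty_LSet (σ : Fin n → ℤ) (i : Fin n) : (LSet σ i).Nonempty :=
  ⟨1, one_mem_LSet σ i⟩

lemma one_le_L (σ : Fin n → ℤ) (i : Fin n) : 1 ≤ L σ i :=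
  le_csSup (bddAbove_LSet σ i) (one_mem_LSet σ i)

lemma L_mem (σ : Fin n → ℤ) (i : Fin n) : L σ i ∈ LSet σ i :=
  Nat.sSup_mem (nonempty_LSet σ i) (bddAbove_LSet σ i)

lemma le_L_of_mem (σ : Fin n → ℤ) (i : Fin n) {m : ℕ} (hm : m ∈ LSet σ i) : m ≤ L σ i :=
  le_csSup (bddAbove_LSet σ i) hm

/-- Key lemma: if `k < L σ j` and `1 ≤ k`, there is an element `i` before `j` with
smaller value whose pile index is exactly `k`. -/
lemma exists_pile_elem (σ : Fin n → ℤ) (j : Fin n) (k : ℕ) (hk1 : 1 ≤ k)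
    (hk : k < L σ j) : ∃ i : Fin n, i < j ∧ σ i < σ j ∧ L σ i = k := by
  obtain ⟨l, hl, hlast, hlen⟩ := L_mem σ j
  rw [isIncSubseq_iff_pairwise] at hl
  obtain ⟨m, rfl⟩ : ∃ m, k = m + 1 := ⟨k - 1, by omega⟩
  have hmlen : m < l.length := by omega
  set i : Fin n := l[m] with hi
  have hlne : l ≠ [] := List.ne_nil_of_length_pos (by omega)
  have hjget : l[l.length - 1]'(by omega) = j := by
    have := List.getLast_eq_getElem hlne
    rw [List.getLast?_eq_getLast hlne] at hlast
    simpa [this, eq_comm] using hlast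
  have hpg := List.pairwise_iff_getElem.mp hl
  have hij : Rel σ i j := by
    have := hpg m (l.length - 1) hmlen (by omega) (by omega)
    rwa [hjget] at this
  refine ⟨i, hij.1, hij.2, ?_⟩
  -- `L σ i ≥ m + 1` via the prefix `l.take (m+1)`
  have hgelen : (l.take (m + 1)).length = m + 1 := by
    simp [Nat.min_eq_left (by omega : m + 1 ≤ l.length)]
  have hmem : m + 1 ∈ LSet σ i := by
    refine ⟨l.take (m + 1), ?_, ?_, hgelen⟩
    · rw [isIncSubseq_iff_pairwise]
      exact hl.sublist (List.take_sublist _ _)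
    · rw [List.getLast?_eq_getElem?, hgelen]
      simp only [Nat.add_sub_cancel]
      rw [List.getElem?_take_of_lt (by omega)]
      exact List.getElem?_eq_getElem hmlen
  have hge : m + 1 ≤ L σ i := le_L_of_mem σ i hmem
  -- `L σ i ≤ m + 1` : otherwise we could splice to get a longer subsequence ending at `j`
  have hle : L σ i ≤ m + 1 := by
    by_contra hlt
    push_neg at hlt
    obtain ⟨l1, hl1, hl1last, hl1len⟩ := L_mem σ i
    rw [isIncSubseq_iff_pairwise] at hl1
    set l2 := l.drop (m + 1) with hl2
    have hl2len : l2.length = l.length - (m + 1) := List.length_drop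
    have hl2ne : l2 ≠ [] := List.ne_nil_of_length_pos (by omega)
    -- every element of l1 is i or related to i
    have hl1ne : l1 ≠ [] := by
      intro h; rw [h] at hl1last; simp at hl1last
    have hl1i : ∀ a ∈ l1, a = i ∨ Rel σ a i := by
      intro a ha
      have hsplit := List.dropLast_append_getLast? i hl1last
      rw [← hsplit] at ha hl1
      rcases List.mem_append.mp ha with h | h
      · exact Or.inr ((List.pairwise_append.mp hl1).2.2 a h i (by simp))
      · exact Or.inl (by simpa using h)
    -- i is related to every element of l2
    have hil2 : ∀ b ∈ l2, Rel σ i b := by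
      intro b hb
      obtain ⟨r, hr, hrb⟩ := List.mem_iff_getElem.mp hb
      have : l2[r] = l[m + 1 + r]'(by omega) := by
        simp [hl2, Nat.add_comm]
      rw [this] at hrb
      rw [← hrb]
      exact hpg m (m + 1 + r) hmlen (by omega) (by omega)
    have hpair : (l1 ++ l2).Pairwise (Rel σ) := by
      rw [List.pairwise_append]
      refine ⟨hl1, hl.sublist (List.drop_sublist _ _), fun a ha b hb => ?_⟩
      rcases hl1i a ha with rfl | h
      · exact hil2 b hb
      · exact _root_.trans h (hil2 b hb)
    have hlast2 : l2.getLast? = some j := by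
      have : l.take (m + 1) ++ l2 = l := List.take_append_drop _ _
      rw [← this, List.getLast?_append_of_ne_nil _ hl2ne] at hlast
      exact hlast
    have hmem2 : l1.length + l2.length ∈ LSet σ j := by
      refine ⟨l1 ++ l2, ?_, ?_, by simp⟩
      · rw [isIncSubseq_iff_pairwise]; exact hpair
      · rw [List.getLast?_append_of_ne_nil _ hl2ne]; exact hlast2
    have := le_L_of_mem σ j hmem2
    omega
  omega

end PatienceAux

/-- At any point `t` during Patience Sorting the top elements of the piles are strictly
increasing from left to right: for `k < k'`, if both partial piles
`A = {i ≤ t | L σ i = k}` and `B = {i ≤ t | L σ i = k'}` are nonempty, then the top of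
pile `k` (the minimum of `σ` over `A`) is smaller than the top of pile `k'`. -/
theorem tops_strictly_increasing {n : ℕ} (σ : Fin n → ℤ) (t : Fin n) (k k' : ℕ)
    (hkk' : k < k')
    (hA : (Finset.univ.filter (fun i : Fin n => i ≤ t ∧ L σ i = k)).Nonempty)
    (hB : (Finset.univ.filter (fun i : Fin n => i ≤ t ∧ L σ i = k')).Nonempty) :
    (Finset.univ.filter (fun i : Fin n => i ≤ t ∧ L σ i = k)).inf' hA σ <
      (Finset.univ.filter (fun i : Fin n => i ≤ t ∧ L σ i = k')).inf' hB σ := by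
  -- `k ≥ 1` since every pile index is at least 1
  have hk1 : 1 ≤ k := by
    obtain ⟨a, ha⟩ := hA
    simp only [Finset.mem_filter, Finset.mem_univ, true_and] at ha
    have := PatienceAux.one_le_L σ a
    omega
  obtain ⟨b, hbB, hbeq⟩ := Finset.exists_mem_eq_inf' hB σ
  simp only [Finset.mem_filter, Finset.mem_univ, true_and] at hbB
  obtain ⟨hbt, hbL⟩ := hbB
  obtain ⟨i, hij, hσ, hLi⟩ := PatienceAux.exists_pile_elem σ b k hk1 (by omega)
  have hiA : i ∈ Finset.univ.filter (fun i : Fin n => i ≤ t ∧ L σ i = k) := by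
    simp only [Finset.mem_filter, Finset.mem_univ, true_and]
    exact ⟨le_trans hij.le hbt, hLi⟩
  calc (Finset.univ.filter (fun i : Fin n => i ≤ t ∧ L σ i = k)).inf' hA σ
      ≤ σ i := Finset.inf'_le σ hiA
    _ < σ b := hσ
    _ = _ := hbeq.symm
end

section
/- Filtering criterion with respect to a fixed pile: let 1 ≤ y ≤ n and let i ≥ 1 be such that the set {x < y : L(x) = i} is nonempty, and let x be the largest index less than y with L(x) = i (so σ(x) is the top of pile P_i when σ(y) is processed). If σ(y) > σ(x) then L(y) > i, and if σ(y) ≤ σ(x) and L(y) ≠ i then L(y) < i. -/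
namespace Filt

variable {n : ℕ} (σ : Fin n → ℤ)

lemma bdd (y : Fin n) :
    BddAbove {m | ∃ l : List (Fin n), IsIncSubseq σ l ∧ l.getLast? = some y ∧ l.length = m} := by
  refine ⟨n, ?_⟩
  rintro m ⟨l, hl, -, rfl⟩
  haveI : IsTrans (Fin n) (fun i j => i < j ∧ σ i < σ j) :=
    ⟨fun a b c h1 h2 => ⟨h1.1.trans h2.1, h1.2.trans h2.2⟩⟩
  have hp : l.Pairwise (fun i j => i < j ∧ σ i < σ j) :=
    (List.isChain_iff_pairwise).mp hl
  have hnd : l.Nodup := hp.imp (fun h => ne_of_lt h.1)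
  simpa using hnd.length_le_card

lemma one_mem (y : Fin n) :
    1 ∈ {m | ∃ l : List (Fin n), IsIncSubseq σ l ∧ l.getLast? = some y ∧ l.length = m} :=
  ⟨[y], List.isChain_singleton _, rfl, rfl⟩

lemma one_le (y : Fin n) : 1 ≤ L σ y := le_csSup (bdd σ y) (one_mem σ y)

lemma le_L {l : List (Fin n)} {y : Fin n} (hl : IsIncSubseq σ l)
    (hy : l.getLast? = some y) : l.length ≤ L σ y :=
  le_csSup (bdd σ y) ⟨l, hl, hy, rfl⟩

lemma exists_witness (y : Fin n) :
    ∃ l : List (Fin n), IsIncSubseq σ l ∧ l.getLast? = some y ∧ l.length = L σ y :=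
  Nat.sSup_mem ⟨1, one_mem σ y⟩ (bdd σ y)

lemma step {x y : Fin n} (hxy : x < y) (hσ : σ x < σ y) : L σ x + 1 ≤ L σ y := by
  obtain ⟨l, hl, hlast, hlen⟩ := exists_witness σ x
  have h2 : IsIncSubseq σ (l ++ [y]) := by
    rw [IsIncSubseq, List.Chain', List.isChain_append]
    refine ⟨hl, List.isChain_singleton _, ?_⟩
    intro a ha b hb
    simp only [List.head?_cons, Option.mem_def, Option.some.injEq] at hb
    rw [hlast] at ha
    simp only [Option.mem_def, Option.some.injEq] at ha
    subst ha; subst hb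
    exact ⟨hxy, hσ⟩
  have hgl : (l ++ [y]).getLast? = some y := by
    rw [List.getLast?_append]; rfl
  have := le_L σ h2 hgl
  simpa [hlen] using this

lemma pred {y : Fin n} (h : 2 ≤ L σ y) :
    ∃ z, z < y ∧ σ z < σ y ∧ L σ z = L σ y - 1 := by
  obtain ⟨l, hl, hlast, hlen⟩ := exists_witness σ y
  have hne : l ≠ [] := by
    intro h0; rw [h0] at hlen; simp at hlen; omega
  have hy : l.getLast hne = y := by
    have := List.getLast?_eq_getLast hne
    exact Option.some.inj (this.symm.trans hlast)
  have hdec : l = l.dropLast ++ [y] := by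
    conv_lhs => rw [← List.dropLast_append_getLast hne]
    rw [hy]
  have hne1 : l.dropLast ≠ [] := by
    have : l.dropLast.length = l.length - 1 := List.length_dropLast
    intro h0; rw [h0] at this; simp at this; omega
  set z := l.dropLast.getLast hne1 with hz
  rw [hdec, IsIncSubseq, List.Chain', List.isChain_append] at hl
  obtain ⟨h1, -, h3⟩ := hl
  have hrel : z < y ∧ σ z < σ y := by
    refine h3 z ?_ y (by simp)
    rw [List.getLast?_eq_getLast hne1, Option.mem_def]
  have hge : l.dropLast.length ≤ L σ z :=
    le_L σ h1 (List.getLast?_eq_getLast hne1)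
  have hle : L σ z + 1 ≤ L σ y := step σ hrel.1 hrel.2
  have hld : l.dropLast.length = l.length - 1 := List.length_dropLast
  exact ⟨z, hrel.1, hrel.2, by omega⟩

lemma exists_eq : ∀ m : ℕ, ∀ y : Fin n, L σ y = m → ∀ k, 1 ≤ k → k < m →
    ∃ z, z < y ∧ σ z < σ y ∧ L σ z = k := by
  intro m
  induction m using Nat.strong_induction_on with
  | _ m ih =>
    intro y hy k hk1 hk
    have h2 : 2 ≤ L σ y := by omega
    obtain ⟨z, hzy, hσ, hLz⟩ := pred σ h2
    rcases eq_or_lt_of_le (show k ≤ m - 1 by omega) with heq | hlt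
    · exact ⟨z, hzy, hσ, by omega⟩
    · obtain ⟨w, hwz, hσw, hLw⟩ := ih (m-1) (by omega) z (by omega) k hk1 hlt
      exact ⟨w, hwz.trans hzy, hσw.trans hσ, hLw⟩

end Filt

/-- Filtering criterion with respect to a fixed pile: let `x` be the largest index
before `y` lying in pile `i` (so `σ x` is the top of pile `P_i` when `σ y` is
processed). If `σ y > σ x` then `L σ y > i`; if `σ y ≤ σ x` and `L σ y ≠ i`,
then `L σ y < i`. -/
theorem filtering_criterion {n : ℕ} (σ : Fin n → ℤ) (y : Fin n) (i : ℕ) (hi : 1 ≤ i)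
    (x : Fin n) (hxy : x < y) (hxi : L σ x = i)
    (hmax : ∀ x' : Fin n, x' < y → L σ x' = i → x' ≤ x) :
    (σ x < σ y → i < L σ y) ∧ (σ y ≤ σ x → L σ y ≠ i → L σ y < i) := by
  constructor
  · intro hσ
    have := Filt.step σ hxy hσ
    omega
  · intro hσ hne
    by_contra hcon
    have hgt : i < L σ y := by omega
    obtain ⟨z, hzy, hσz, hLz⟩ := Filt.exists_eq σ (L σ y) y rfl i hi hgt
    have hle : z ≤ x := hmax z hzy hLz
    rcases lt_or_eq_of_le hle with hlt | heq
    · have : L σ x + 1 ≤ L σ x := by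
        have := Filt.step σ hlt (lt_of_lt_of_le hσz hσ)
        omega
      omega
    · subst heq
      exact absurd (lt_of_lt_of_le hσz hσ) (lt_irrefl _)
end

section
/- Splitting lemma: suppose σ(j) is the k-th element of some longest increasing subsequence of σ (i.e., there are indices i₁ < ⋯ < i_ℓ with σ(i₁) < ⋯ < σ(i_ℓ), ℓ = lis(σ), and i_k = j). Let σ_L be the subsequence of ⟨σ(1),…,σ(j−1)⟩ formed by the elements smaller than σ(j), and let σ_R be the subsequence of ⟨σ(j+1),…,σ(n)⟩ formed by the elements larger than σ(j). Then concatenating any longest increasing subsequence of σ_L, the element σ(j), and any longest increasing subsequence of σ_R yields a longest increasing subsequence of σ; in particular lis(σ) = lis(σ_L) + 1 + lis(σ_R). -/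
/-- Length of a longest strictly increasing subsequence of a list of integers. -/
noncomputable def lisL (l : List ℤ) : ℕ :=
  sSup {m | ∃ t : List ℤ, t.Sublist l ∧ t.Pairwise (· < ·) ∧ t.length = m}

/- ### Auxiliary lemmas -/

lemma lis_set_bddAbove {n : ℕ} (σ : Fin n → ℤ) :
    BddAbove {m | ∃ l : List (Fin n), IsIncSubseq σ l ∧ l.length = m} := by
  refine ⟨n, ?_⟩
  rintro m ⟨l, hl, rfl⟩
  haveI : IsTrans (Fin n) (fun i j => i < j ∧ σ i < σ j) :=
    ⟨fun a b c h1 h2 => ⟨h1.1.trans h2.1, h1.2.trans h2.2⟩⟩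
  have hpw : l.Pairwise (· < ·) := by
    have := List.isChain_iff_pairwise.mp hl
    exact this.imp (fun h => h.1)
  have := hpw.nodup.length_le_card (α := Fin n)
  simpa using this

lemma lisL_set_bddAbove (L : List ℤ) :
    BddAbove {m | ∃ t : List ℤ, t.Sublist L ∧ t.Pairwise (· < ·) ∧ t.length = m} := by
  refine ⟨L.length, ?_⟩
  rintro m ⟨t, ht, _, rfl⟩
  exact ht.length_le

lemma le_lisL {L : List ℤ} {t : List ℤ} (ht : t.Sublist L) (hts : t.Pairwise (· < ·)) :
    t.length ≤ lisL L :=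
  le_csSup (lisL_set_bddAbove L) ⟨t, ht, hts, rfl⟩

/-- pairwise-increasing index lists with all indices `< m` map to sublists of the take. -/
lemma map_sublist_take {n m : ℕ} (σ : Fin n → ℤ) (is : List (Fin n))
    (hp : is.Pairwise (· < ·)) (hm : ∀ i ∈ is, i.val < m) :
    (is.map σ).Sublist ((List.ofFn σ).take m) := by
  set T : List ℤ := (List.ofFn σ).take m with hT
  have hTlen : T.length = min m n := by simp [hT]
  have hmem : ∀ i ∈ is, i.val < T.length := fun i hi =>
    hTlen ▸ lt_min (hm i hi) i.isLt
  have key : is.map σ = (is.pmap (fun i (h : i.val < T.length) => (⟨i.val, h⟩ : Fin T.length)) hmem).map T.get := by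
    rw [List.map_pmap]
    rw [show (fun (i : Fin n) (h : i.val < T.length) => T.get ⟨i.val, h⟩)
        = (fun (i : Fin n) (_ : i.val < T.length) => σ i) from ?_]
    · rw [List.pmap_eq_map]
    · funext i h
      show T[i.val] = σ i
      simp [hT, List.getElem_take]
  rw [key]
  apply List.map_getElem_sublist
  rw [List.pairwise_pmap]
  exact hp.imp (fun {a b} h => fun h₁ h₂ => by simpa using h)

lemma map_sublist_drop {n m : ℕ} (σ : Fin n → ℤ) (is : List (Fin n))
    (hp : is.Pairwise (· < ·)) (hm : ∀ i ∈ is, m < i.val) :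
    (is.map σ).Sublist ((List.ofFn σ).drop (m + 1)) := by
  set T : List ℤ := (List.ofFn σ).drop (m + 1) with hT
  have hTlen : T.length = n - (m + 1) := by simp [hT]
  have hmem : ∀ i ∈ is, i.val - (m + 1) < T.length := fun i hi => by
    rw [hTlen]
    exact Nat.sub_lt_sub_right (hm i hi) i.isLt
  have key : is.map σ = (is.pmap (fun i (h : i.val - (m+1) < T.length) => (⟨i.val - (m+1), h⟩ : Fin T.length)) hmem).map T.get := by
    rw [List.map_pmap]
    have heq : is.pmap (fun i (h : i.val - (m+1) < T.length) => T.get ⟨i.val - (m+1), h⟩) hmem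
        = is.pmap (fun i (_ : i.val - (m+1) < T.length) => σ i) hmem := by
      apply List.pmap_congr_left
      intro i hi h₁ h₂
      show T[i.val - (m+1)] = σ i
      have hmi : m + 1 ≤ i.val := hm i hi
      have h2 : m + 1 + (i.val - (m+1)) < n := by have := i.isLt; omega
      simp only [hT, List.getElem_drop, List.getElem_ofFn]
      congr 1
      exact Fin.ext (by simp; omega)
    rw [heq, List.pmap_eq_map]
  rw [key]
  apply List.map_getElem_sublist
  rw [List.pairwise_pmap]
  refine List.Pairwise.imp_of_mem ?_ hp
  intro a b ha hb hab h₁ h₂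
  show (a.val - (m+1) : ℕ) < b.val - (m+1)
  have ha' : m < a.val := hm a ha
  have : a.val < b.val := hab
  omega

/-- Any sorted sublist of `List.ofFn σ` gives an increasing index subsequence. -/
lemma sorted_sublist_length_le_lis {n : ℕ} (σ : Fin n → ℤ) (t : List ℤ)
    (ht : t.Sublist (List.ofFn σ)) (hts : t.Pairwise (· < ·)) :
    t.length ≤ lis σ := by
  obtain ⟨is, his, hpw⟩ := List.sublist_eq_map_getElem ht
  set φ : Fin (List.ofFn σ).length → Fin n := Fin.cast (List.length_ofFn (f := σ)) with hφ
  have hget : ∀ i : Fin (List.ofFn σ).length, (List.ofFn σ).get i = σ (φ i) := by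
    intro i; exact List.get_ofFn σ i
  refine le_csSup (lis_set_bddAbove σ) ⟨is.map φ, ?_, by simp [his]⟩
  apply List.Pairwise.isChain
  rw [List.pairwise_map]
  have h1 : is.Pairwise (fun a b => φ a < φ b) := hpw.imp (fun h => h)
  have h2 : is.Pairwise (fun a b => σ (φ a) < σ (φ b)) := by
    have h3 : List.Pairwise (· < ·) (List.map (List.ofFn σ).get is) := his ▸ hts
    rw [List.pairwise_map] at h3
    exact h3.imp (fun {a b} h => by rwa [hget, hget] at h)
  exact h1.and h2

/-- Splitting lemma: if `σ j` is the `(k+1)`-st element of some longest increasing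
subsequence of `σ` (index list `l`), `σL` is the subsequence of `⟨σ 0, …, σ (j-1)⟩`
of elements smaller than `σ j`, and `σR` is the subsequence of `⟨σ (j+1), …, σ (n-1)⟩`
of elements larger than `σ j`, then concatenating any longest increasing subsequence
of `σL`, the element `σ j`, and any longest increasing subsequence of `σR` yields a
longest increasing subsequence of `σ`; in particular
`lis σ = lisL σL + 1 + lisL σR`. -/
theorem splitting_lemma {n : ℕ} (σ : Fin n → ℤ) (l : List (Fin n))
    (hl : IsIncSubseq σ l) (hlen : l.length = lis σ)
    (k : Fin l.length) (j : Fin n) (hj : l.get k = j)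
    (σL σR : List ℤ)
    (hσL : σL = ((List.ofFn σ).take j.val).filter (fun a => a < σ j))
    (hσR : σR = ((List.ofFn σ).drop (j.val + 1)).filter (fun a => σ j < a))
    (tL : List ℤ) (htL : tL.Sublist σL) (htLs : tL.Pairwise (· < ·))
    (htLlen : tL.length = lisL σL)
    (tR : List ℤ) (htR : tR.Sublist σR) (htRs : tR.Pairwise (· < ·))
    (htRlen : tR.length = lisL σR) :
    (tL ++ σ j :: tR).Sublist (List.ofFn σ) ∧
    (tL ++ σ j :: tR).Pairwise (· < ·) ∧
    (tL ++ σ j :: tR).length = lis σ ∧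
    lis σ = lisL σL + 1 + lisL σR := by
  -- elements of tL are < σ j, elements of tR are > σ j
  have htL_lt : ∀ x ∈ tL, x < σ j := by
    intro x hx
    have := htL.mem hx
    rw [hσL] at this
    simpa using (List.of_mem_filter this)
  have htR_gt : ∀ x ∈ tR, σ j < x := by
    intro x hx
    have := htR.mem hx
    rw [hσR] at this
    simpa using (List.of_mem_filter this)
  -- decomposition of ofFn σ
  have hjlen : j.val < (List.ofFn σ).length := by simp [j.isLt]
  have hdecomp : List.ofFn σ =
      (List.ofFn σ).take j.val ++ σ j :: (List.ofFn σ).drop (j.val + 1) := by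
    conv_lhs => rw [← List.take_append_drop j.val (List.ofFn σ)]
    rw [List.drop_eq_getElem_cons hjlen]
    congr 2
    simp
  -- sublist claim
  have hsub : (tL ++ σ j :: tR).Sublist (List.ofFn σ) := by
    rw [hdecomp]
    apply List.Sublist.append
    · exact htL.trans (by rw [hσL]; exact List.filter_sublist)
    · exact List.Sublist.cons₂ _ (htR.trans (by rw [hσR]; exact List.filter_sublist))
  -- sorted claim
  have hsort : (tL ++ σ j :: tR).Pairwise (· < ·) := by
    rw [List.pairwise_append]
    refine ⟨htLs, ?_, ?_⟩
    · rw [List.pairwise_cons]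
      exact ⟨htR_gt, htRs⟩
    · intro x hx y hy
      rcases List.mem_cons.mp hy with rfl | hy
      · exact htL_lt x hx
      · exact (htL_lt x hx).trans (htR_gt y hy)
  -- length of the concatenation
  have hlenconcat : (tL ++ σ j :: tR).length = lisL σL + 1 + lisL σR := by
    simp [htLlen, htRlen]; omega
  -- ≤ : the concatenation witnesses lisL σL + 1 + lisL σR ≤ lis σ
  have hle : lisL σL + 1 + lisL σR ≤ lis σ := by
    rw [← hlenconcat]
    exact sorted_sublist_length_le_lis σ _ hsub hsort
  -- ≥ : split l at position k
  have htrans : IsTrans (Fin n) (fun i j => i < j ∧ σ i < σ j) :=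
    ⟨fun a b c h1 h2 => ⟨h1.1.trans h2.1, h1.2.trans h2.2⟩⟩
  have hpw : l.Pairwise (fun i j => i < j ∧ σ i < σ j) :=
    (haveI := htrans; List.isChain_iff_pairwise.mp hl)
  have hldecomp : l = l.take k.val ++ j :: l.drop (k.val + 1) := by
    have h0 : l[k.val] = j := by rw [← hj]; rfl
    conv_lhs => rw [← List.take_append_drop k.val l]
    rw [List.drop_eq_getElem_cons k.isLt, h0]
  rw [hldecomp, List.pairwise_append] at hpw
  obtain ⟨hpw1, hpw2, hpw3⟩ := hpw
  rw [List.pairwise_cons] at hpw2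
  obtain ⟨hj2, hpw2⟩ := hpw2
  have hL1 : ∀ i ∈ l.take k.val, i < j ∧ σ i < σ j := fun i hi =>
    hpw3 i hi j (List.mem_cons_self)
  -- map σ over the two pieces
  have hL1pw : (l.take k.val).Pairwise (· < ·) := hpw1.imp (fun h => h.1)
  have hL2pw : (l.drop (k.val + 1)).Pairwise (· < ·) := hpw2.imp (fun h => h.1)
  have hsubL : ((l.take k.val).map σ).Sublist σL := by
    rw [hσL]
    have h1 : ((l.take k.val).map σ).Sublist ((List.ofFn σ).take j.val) :=
      map_sublist_take σ _ hL1pw (fun i hi => (hL1 i hi).1)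
    have h2 : ((l.take k.val).map σ).filter (fun a => a < σ j) = (l.take k.val).map σ := by
      rw [List.filter_eq_self]
      intro a ha
      rw [List.mem_map] at ha
      obtain ⟨i, hi, rfl⟩ := ha
      simpa using (hL1 i hi).2
    have h3 := h1.filter (fun a => decide (a < σ j))
    rw [h2] at h3
    exact h3
  have hsubR : ((l.drop (k.val + 1)).map σ).Sublist σR := by
    rw [hσR]
    have h1 : ((l.drop (k.val + 1)).map σ).Sublist ((List.ofFn σ).drop (j.val + 1)) :=
      map_sublist_drop σ _ hL2pw (fun i hi => (hj2 i hi).1)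
    have h2 : ((l.drop (k.val + 1)).map σ).filter (fun a => σ j < a) = (l.drop (k.val + 1)).map σ := by
      rw [List.filter_eq_self]
      intro a ha
      rw [List.mem_map] at ha
      obtain ⟨i, hi, rfl⟩ := ha
      simpa using (hj2 i hi).2
    have h3 := h1.filter (fun a => decide (σ j < a))
    rw [h2] at h3
    exact h3
  have hsortL : ((l.take k.val).map σ).Pairwise (· < ·) := by
    rw [List.pairwise_map]
    exact hpw1.imp (fun h => h.2)
  have hsortR : ((l.drop (k.val + 1)).map σ).Pairwise (· < ·) := by
    rw [List.pairwise_map]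
    exact hpw2.imp (fun h => h.2)
  have hkle : k.val ≤ lisL σL := by
    have := le_lisL hsubL hsortL
    rwa [List.length_map, List.length_take, min_eq_left k.isLt.le] at this
  have hdle : l.length - (k.val + 1) ≤ lisL σR := by
    have := le_lisL hsubR hsortR
    rwa [List.length_map, List.length_drop] at this
  have hge : lis σ ≤ lisL σL + 1 + lisL σR := by
    have hk := k.isLt
    calc lis σ = l.length := hlen.symm
      _ ≤ lisL σL + 1 + lisL σR := by omega
  have hmain : lis σ = lisL σL + 1 + lisL σR := le_antisymm hge hle
  exact ⟨hsub, hsort, by rw [hlenconcat, hmain], hmain⟩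
end

section
/- Under the hypotheses of the splitting lemma (σ(j) is the k-th element of some longest increasing subsequence of σ, σ_L is the subsequence of ⟨σ(1),…,σ(j−1)⟩ of elements smaller than σ(j), and σ_R is the subsequence of ⟨σ(j+1),…,σ(n)⟩ of elements larger than σ(j)), one has lis(σ_L) ≥ k − 1 and lis(σ_R) ≥ lis(σ) − k, hence lis(σ_L) + lis(σ_R) + 1 ≥ lis(σ). -/
lemma map_getD_sublist : ∀ (s : List ℤ) (is : List ℕ), is.Pairwise (· < ·) →
    (∀ i ∈ is, i < s.length) → (is.map (fun i => s.getD i 0)).Sublist s := by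
  intro s
  induction s with
  | nil => intro is _ hb; cases is with
    | nil => simp
    | cons i is => exact absurd (hb i (by simp)) (by simp)
  | cons a s ih =>
    intro is hp hb
    cases is with
    | nil => simp
    | cons i is =>
      have key : ∀ js : List ℕ, js.Pairwise (· < ·) → (∀ i' ∈ js, 0 < i') →
          (∀ i' ∈ js, i' < (a :: s).length) →
          (js.map (fun i => (a :: s).getD i 0)).Sublist s := by
        intro js hjp hjpos hjb
        have heq : js.map (fun i => (a :: s).getD i 0)
            = (js.map (· - 1)).map (fun i => s.getD i 0) := by
          rw [List.map_map]
          refine List.map_congr_left fun i' h => ?_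
          obtain ⟨m, rfl⟩ := Nat.exists_eq_add_of_lt (hjpos i' h)
          simp [List.getD]
        rw [heq]
        refine ih _ ?_ ?_
        · rw [List.pairwise_map]
          refine (List.pairwise_iff_getElem.mpr fun p q hp' hq' hpq => ?_)
          have h1 := List.pairwise_iff_getElem.mp hjp p q hp' hq' hpq
          have h2 := hjpos _ (js.getElem_mem hp')
          omega
        · intro x hx
          simp only [List.mem_map] at hx
          obtain ⟨i', hi', rfl⟩ := hx
          have h1 := hjb i' hi'
          have h2 := hjpos i' hi'
          simp only [List.length_cons] at h1
          omega
      rcases Nat.eq_zero_or_pos i with hi0 | hipos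
      · subst hi0
        have hall : ∀ i' ∈ is, 0 < i' := fun i' h => (List.pairwise_cons.mp hp).1 i' h
        have h0 : (0 :: is).map (fun i => (a :: s).getD i 0)
            = a :: is.map (fun i => (a :: s).getD i 0) := by simp [List.getD]
        rw [h0]
        exact List.Sublist.cons₂ a (key is (List.pairwise_cons.mp hp).2 hall
          fun i' h => hb i' (List.mem_cons_of_mem _ h))
      · refine List.Sublist.cons a (key (i :: is) hp ?_ hb)
        intro i' h
        rcases List.mem_cons.mp h with rfl | h
        · exact hipos
        · exact lt_trans hipos ((List.pairwise_cons.mp hp).1 i' h)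

lemma lisL_ge (l : List ℤ) (t : List ℤ) (ht : t.Sublist l) (hs : t.Pairwise (· < ·)) :
    t.length ≤ lisL l := by
  refine le_csSup ⟨l.length, ?_⟩ ⟨t, ht, hs, rfl⟩
  rintro m ⟨t', ht', _, rfl⟩
  exact ht'.length_le

/-- Under the hypotheses of the splitting lemma (`σ j` is the `(k+1)`-st element of
some longest increasing subsequence of `σ`, `σL` is the subsequence of
`⟨σ 0, …, σ (j-1)⟩` of elements smaller than `σ j`, and `σR` is the subsequence of
`⟨σ (j+1), …, σ (n-1)⟩` of elements larger than `σ j`), one has `lisL σL ≥ k` and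
`lisL σR ≥ lis σ - (k + 1)` (with 0-indexed `k`), hence
`lisL σL + lisL σR + 1 ≥ lis σ`. -/
theorem splitting_lower_bounds {n : ℕ} (σ : Fin n → ℤ) (l : List (Fin n))
    (hl : IsIncSubseq σ l) (hlen : l.length = lis σ)
    (k : Fin l.length) (j : Fin n) (hj : l.get k = j)
    (σL σR : List ℤ)
    (hσL : σL = ((List.ofFn σ).take j.val).filter (fun a => a < σ j))
    (hσR : σR = ((List.ofFn σ).drop (j.val + 1)).filter (fun a => σ j < a)) :
    (k : ℕ) ≤ lisL σL ∧ lis σ - ((k : ℕ) + 1) ≤ lisL σR ∧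
      lis σ ≤ lisL σL + lisL σR + 1 := by
  set r : Fin n → Fin n → Prop := fun i j => i < j ∧ σ i < σ j with hr
  haveI : IsTrans (Fin n) r := ⟨fun a b c hab hbc => ⟨lt_trans hab.1 hbc.1, lt_trans hab.2 hbc.2⟩⟩
  have hp : l.Pairwise r := List.isChain_iff_pairwise.mp hl
  -- left part
  have hleft : ∀ x ∈ l.take k.val, r x j := by
    intro x hx
    obtain ⟨p, hm, hpx⟩ := List.mem_take_iff_getElem.mp hx
    have := List.pairwise_iff_getElem.mp hp p k.val (by omega) k.isLt (by omega)
    rw [hpx] at this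
    rwa [show l[k.val] = j from hj] at this
  set tL := (l.take k.val).map σ with htL
  have hsubL : tL.Sublist σL := by
    set s0 := (List.ofFn σ).take j.val with hs0
    have hs0len : s0.length = j.val := by simp [hs0, Nat.min_eq_left (le_of_lt j.isLt)]
    have heq : tL = ((l.take k.val).map (Fin.val)).map (fun i => s0.getD i 0) := by
      rw [List.map_map]
      refine List.map_congr_left fun x hx => ?_
      have hxj : (x : ℕ) < j.val := (hleft x hx).1
      have hb : (x : ℕ) < s0.length := by omega
      simp only [Function.comp]
      rw [List.getD_eq_getElem _ _ hb]
      simp [hs0, List.getElem_take]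
    have hsub0 : tL.Sublist s0 := by
      rw [heq]
      refine map_getD_sublist s0 _ ?_ ?_
      · rw [List.pairwise_map]
        exact (hp.sublist (l.take_sublist _)).imp fun h => h.1
      · intro i hi
        simp only [List.mem_map] at hi
        obtain ⟨x, hx, rfl⟩ := hi
        have := (hleft x hx).1
        omega
    have hfe : tL.filter (fun a => a < σ j) = tL := by
      rw [List.filter_eq_self]
      intro a ha
      simp only [htL, List.mem_map] at ha
      obtain ⟨x, hx, rfl⟩ := ha
      simpa using (hleft x hx).2
    rw [hσL, ← hfe]
    exact hsub0.filter _
  have hsortL : tL.Pairwise (· < ·) :=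
    List.pairwise_map.mpr ((hp.sublist (l.take_sublist _)).imp fun h => h.2)
  have hlenL : tL.length = k.val := by
    simp [htL, Nat.min_eq_left (le_of_lt k.isLt)]
  have h1 : (k : ℕ) ≤ lisL σL := hlenL ▸ lisL_ge σL tL hsubL hsortL
  -- right part
  have hright : ∀ x ∈ l.drop (k.val + 1), r j x := by
    intro x hx
    obtain ⟨q, hq, hqx⟩ := List.mem_iff_getElem.mp hx
    rw [List.getElem_drop] at hqx
    have hql : k.val + 1 + q < l.length := by
      have : (l.drop (k.val + 1)).length = l.length - (k.val + 1) := List.length_drop; omega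
    have := List.pairwise_iff_getElem.mp hp k.val (k.val + 1 + q) k.isLt hql (by omega)
    rw [hqx] at this
    rwa [show l[k.val] = j from hj] at this
  set tR := (l.drop (k.val + 1)).map σ with htR
  have hsubR : tR.Sublist σR := by
    set s1 := (List.ofFn σ).drop (j.val + 1) with hs1
    have hs1len : s1.length = n - (j.val + 1) := by simp [hs1]
    have heq : tR = ((l.drop (k.val + 1)).map (fun x : Fin n => x.val - (j.val + 1))).map
        (fun i => s1.getD i 0) := by
      rw [List.map_map]
      refine List.map_congr_left fun x hx => ?_
      have hxj : j.val < (x : ℕ) := (hright x hx).1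
      have hb : (x : ℕ) - (j.val + 1) < s1.length := by omega
      simp only [Function.comp]
      rw [List.getD_eq_getElem _ _ hb]
      simp only [hs1, List.getElem_drop]
      have : j.val + 1 + ((x : ℕ) - (j.val + 1)) = (x : ℕ) := by omega
      simp [this]
    have hsub1 : tR.Sublist s1 := by
      rw [heq]
      refine map_getD_sublist s1 _ ?_ ?_
      · rw [List.pairwise_map]
        refine List.pairwise_iff_getElem.mpr fun p q hp' hq' hpq => ?_
        have h1 := List.pairwise_iff_getElem.mp
          ((hp.sublist (l.drop_sublist _)).imp (fun h => h.1)) p q hp' hq' hpq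
        have h2 := (hright _ (List.getElem_mem hp')).1
        simp only [Fin.lt_iff_val_lt_val] at h1
        omega
      · intro i hi
        simp only [List.mem_map] at hi
        obtain ⟨x, hx, rfl⟩ := hi
        have := (hright x hx).1
        have := x.isLt
        omega
    have hfe : tR.filter (fun a => σ j < a) = tR := by
      rw [List.filter_eq_self]
      intro a ha
      simp only [htR, List.mem_map] at ha
      obtain ⟨x, hx, rfl⟩ := ha
      simpa using (hright x hx).2
    rw [hσR, ← hfe]
    exact hsub1.filter _
  have hsortR : tR.Pairwise (· < ·) :=
    List.pairwise_map.mpr ((hp.sublist (l.drop_sublist _)).imp fun h => h.2)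
  have hlenR : tR.length = lis σ - (k.val + 1) := by
    simp [htR, ← hlen]
  have h2 : lis σ - ((k : ℕ) + 1) ≤ lisL σR := hlenR ▸ lisL_ge σR tR hsubR hsortR
  have hk : k.val + 1 ≤ lis σ := by have := k.isLt; omega
  exact ⟨h1, h2, by omega⟩
end
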